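/- Let τ* minimize F(τ) = ½‖Σ_l τ_l g_l‖² over the probability simplex Δ = {τ : τ_l ≥ 0, Σ_l τ_l = 1}, where g_l ∈ ℝ^d. If the minimal value F(τ*) is nonzero, then the direction d = −Σ_l τ*_l g_l satisfies ⟨g_l, d⟩ < 0 for every l ∈ [K], i.e., d is a common descent direction for all objectives with gradients g_l. -/

import Mathlib

open Finset RealInnerProductSpace

/-- MGDA common descent direction: if τ* minimizes ½‖Σ τ_l g_l‖² over the
probability simplex and the minimum value is nonzero, then
d = −Σ τ*_l g_l is a strict descent direction for every objective. -/
theorem stmt_3 (K d : ℕ) (g : Fin K → EuclideanSpace ℝ (Fin d))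
    (τ : Fin K → ℝ) (hnonneg : ∀ l, 0 ≤ τ l) (hsum : ∑ l, τ l = 1)
    (hmin : ∀ σ : Fin K → ℝ, (∀ l, 0 ≤ σ l) → (∑ l, σ l = 1) →
      (1 / 2) * ‖∑ l, τ l • g l‖ ^ 2 ≤ (1 / 2) * ‖∑ l, σ l • g l‖ ^ 2)
    (hne : (1 / 2) * ‖∑ l, τ l • g l‖ ^ 2 ≠ 0) :
    ∀ l, ⟪g l, -(∑ j, τ j • g j)⟫ < 0 := by
  intro l
  set v : EuclideanSpace ℝ (Fin d) := ∑ j, τ j • g j with hv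
  have hvpos : 0 < ‖v‖ ^ 2 := by
    have : ‖v‖ ^ 2 ≠ 0 := fun h => hne (by rw [h]; ring)
    positivity
  set w : EuclideanSpace ℝ (Fin d) := g l - v with hw
  have key : ∀ t : ℝ, 0 < t → t ≤ 1 →
      0 ≤ 2 * ⟪v, w⟫ + t * ‖w‖ ^ 2 := by
    intro t ht ht1
    set σ : Fin K → ℝ := fun j => (1 - t) * τ j + t * (if j = l then 1 else 0)
      with hσ
    have hσnn : ∀ j, 0 ≤ σ j := by
      intro j; have := hnonneg j; simp only [hσ]
      split_ifs <;> nlinarith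
    have hσsum : ∑ j, σ j = 1 := by
      simp only [hσ]
      rw [Finset.sum_add_distrib, ← Finset.mul_sum, hsum, ← Finset.mul_sum]
      simp
    have hS : ∑ j, σ j • g j = v + t • w := by
      simp only [hσ, add_smul, mul_smul]
      rw [Finset.sum_add_distrib, ← Finset.smul_sum, ← Finset.smul_sum]
      have h1 : ∑ j, (if j = l then (1:ℝ) else 0) • g j = g l := by
        rw [Finset.sum_eq_single l] <;> simp +contextual
      rw [h1, ← hv, hw]
      rw [sub_smul, one_smul, smul_sub]
      abel
    have hle := hmin σ hσnn hσsum
    rw [hS] at hle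
    have expand : ‖v + t • w‖ ^ 2
        = ‖v‖ ^ 2 + 2 * (t * ⟪v, w⟫) + t ^ 2 * ‖w‖ ^ 2 := by
      rw [norm_add_sq_real, real_inner_smul_right, norm_smul]
      rw [mul_pow]
      simp [abs_of_pos ht]
    rw [expand] at hle
    nlinarith
  have hineq : ‖v‖ ^ 2 ≤ ⟪v, g l⟫ := by
    by_contra hcon
    push_neg at hcon
    have hc : ⟪v, w⟫ < 0 := by
      rw [hw, inner_sub_right, real_inner_self_eq_norm_sq]
      linarith
    rcases eq_or_lt_of_le (sq_nonneg ‖w‖) with hw0 | hw0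
    · have := key 1 one_pos le_rfl
      rw [← hw0] at this; linarith
    · have hts : 0 < -⟪v, w⟫ / ‖w‖ ^ 2 := div_pos (by linarith) hw0
      set t : ℝ := min 1 (-⟪v, w⟫ / ‖w‖ ^ 2) with htdef
      have ht0 : 0 < t := lt_min one_pos hts
      have := key t ht0 (min_le_left _ _)
      have htle : t * ‖w‖ ^ 2 ≤ -⟪v, w⟫ := by
        have : t ≤ -⟪v, w⟫ / ‖w‖ ^ 2 := min_le_right _ _
        calc t * ‖w‖ ^ 2 ≤ (-⟪v, w⟫ / ‖w‖ ^ 2) * ‖w‖ ^ 2 := by nlinarith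
          _ = -⟪v, w⟫ := div_mul_cancel₀ _ (ne_of_gt hw0)
      linarith
  have : 0 < ⟪v, g l⟫ := lt_of_lt_of_le hvpos hineq
  rw [inner_neg_right, real_inner_comm]
  linarith
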